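/- Let p be a prime. For all λ, μ ∈ ℤ^N one has wt(λ) = wt(μ) in P if and only if l(λ) = l(μ) and A_r(λ) − B_r(λ) = A_r(μ) − B_r(μ) for all r ∈ ℤ/pℤ. -/
import Mathlib


namespace Kujawa

open Finset

variable {n : ℕ}

/-- The sign `(−1)^{p̄ i}` attached to the parity sequence `pb`. -/
def sg (pb : Fin (n + 1) → ZMod 2) (i : Fin (n + 1)) : ℤ :=
  if pb i = 0 then 1 else -1

/-- `ϑ_j = ∑_{i > j} (−1)^{p̄_i + p̄_j}`. -/
def theta (pb : Fin (n + 1) → ZMod 2) (j : Fin (n + 1)) : ℤ :=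
  ∑ i ∈ Finset.Ioi j, sg pb i * sg pb j

/-- The standard basis vector `ε_i` of `X(T) = ℤ^N`. -/
def eps (i : Fin (n + 1)) : Fin (n + 1) → ℤ := fun j => if j = i then 1 else 0

/-- The `j`-th residue `r_j(λ) = (λ + ϑ, ε_j)`. -/
def res (pb : Fin (n + 1) → ZMod 2) (l : Fin (n + 1) → ℤ) (j : Fin (n + 1)) : ℤ :=
  sg pb j * (l j + theta pb j)

/-- `ρ = ϑ + ∑_{i : p̄_i = 0} ε_i`, coordinatewise. -/
def rho (pb : Fin (n + 1) → ZMod 2) (k : Fin (n + 1)) : ℤ :=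
  theta pb k + (if pb k = 0 then 1 else 0)

/-- `l(λ) = ∑ λ_i`. -/
def ell (l : Fin (n + 1) → ℤ) : ℤ := ∑ i, l i

/-- The central character value `Z_r(λ)`. -/
def Zint (pb : Fin (n + 1) → ZMod 2) (r : ℕ) (l : Fin (n + 1) → ℤ) : ℤ :=
  ∑ s ∈ Finset.Icc 1 r, (-1 : ℤ) ^ (s - 1) *
    ∑ K ∈ Finset.powersetCard s (Finset.univ : Finset (Fin (n + 1))),
      ∑ a ∈ Fintype.piFinset (fun _ : Fin (n + 1) => Finset.range (r + 2)),
        if (∑ k ∈ K, a k) = r - s + 1 ∧ (∀ k, k ∉ K → a k = 0) then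
          (∏ k ∈ K, sg pb k) * ∏ k ∈ K, res pb l k ^ a k
        else 0

/-- `A_r(λ) = #{i : r_i(λ+ε_i) ≡ r (mod p)}`. -/
def Acount (pb : Fin (n + 1) → ZMod 2) (p : ℕ) (r : ZMod p) (l : Fin (n + 1) → ℤ) : ℕ :=
  (Finset.univ.filter fun i : Fin (n + 1) => ((res pb (l + eps i) i : ℤ) : ZMod p) = r).card

/-- `B_r(λ) = #{i : r_i(λ) ≡ r (mod p)}`. -/
def Bcount (pb : Fin (n + 1) → ZMod 2) (p : ℕ) (r : ZMod p) (l : Fin (n + 1) → ℤ) : ℕ :=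
  (Finset.univ.filter fun i : Fin (n + 1) => ((res pb l i : ℤ) : ZMod p) = r).card

/-- For `p = 0`: `γ_a` is the basis element `single a 1` of the free module `ℤ →₀ ℤ`. -/
noncomputable def gamma0 (a : ℤ) : ℤ →₀ ℤ := Finsupp.single a 1

/-- `wt` for `p = 0`, with values in the free `ℤ`-module on basis `{γ_a : a ∈ ℤ}`. -/
noncomputable def wt0 (pb : Fin (n + 1) → ZMod 2) (l : Fin (n + 1) → ℤ) : ℤ →₀ ℤ :=
  ∑ i : Fin (n + 1), sg pb i • gamma0 (sg pb i * (l i + rho pb i))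

/-- `Λ_r ∈ P = ℤδ ⊕ ⊕_{r ∈ ℤ/pℤ} ℤΛ_r`. -/
def LamP (p : ℕ) (r : ZMod p) : ℤ × (ZMod p → ℤ) := (0, fun s => if s = r then 1 else 0)

/-- `δ ∈ P`. -/
def delP (p : ℕ) : ℤ × (ZMod p → ℤ) := (1, 0)

/-- `γ_a = Λ_{s mod p} − Λ_{(s−1) mod p} − d·δ`, where `a = p·d + s` with `1 ≤ s ≤ p`. -/
def gammaP (p : ℕ) (a : ℤ) : ℤ × (ZMod p → ℤ) :=
  LamP p (((a - 1) % (p : ℤ) + 1 : ℤ) : ZMod p) - LamP p (((a - 1) % (p : ℤ) : ℤ) : ZMod p) -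
    ((a - 1) / (p : ℤ)) • delP p

/-- `wt` for prime `p`. -/
def wtP (p : ℕ) (pb : Fin (n + 1) → ZMod 2) (l : Fin (n + 1) → ℤ) : ℤ × (ZMod p → ℤ) :=
  ∑ i : Fin (n + 1), sg pb i • gammaP p (sg pb i * (l i + rho pb i))

/-- Entry `i` of the `r`-signature of `λ`: `1` codes `+`, `-1` codes `−`, `0` codes `0`. -/
def sig (pb : Fin (n + 1) → ZMod 2) (p : ℕ) (r : ZMod p) (l : Fin (n + 1) → ℤ)
    (i : Fin (n + 1)) : ℤ :=
  if ((res pb (l + eps i) i : ℤ) : ZMod p) = r then 1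
  else if ((res pb l i : ℤ) : ZMod p) = r then -1
  else 0

/-- Number of `−`'s of the `r`-signature of `λ` in positions `[i..j]`. -/
noncomputable def nM (pb : Fin (n + 1) → ZMod 2) (p : ℕ) (r : ZMod p) (l : Fin (n + 1) → ℤ)
    (i j : Fin (n + 1)) : ℕ :=
  Set.ncard {k : Fin (n + 1) | k ∈ Finset.Icc i j ∧ sig pb p r l k = -1}

/-- Number of `+`'s of the `r`-signature of `λ` in positions `[i..j]`. -/
noncomputable def nP (pb : Fin (n + 1) → ZMod 2) (p : ℕ) (r : ZMod p) (l : Fin (n + 1) → ℤ)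
    (i j : Fin (n + 1)) : ℕ :=
  Set.ncard {k : Fin (n + 1) | k ∈ Finset.Icc i j ∧ sig pb p r l k = 1}

/-- `i` is the position of a `−` in the reduced `r`-signature of `λ` (i.e. `i` is
`r`-normal for `λ`): the `−` at `i` is never cancelled, which happens exactly when every
interval `[i..j]` contains strictly more `−`'s than `+`'s. -/
def RMinus (pb : Fin (n + 1) → ZMod 2) (p : ℕ) (r : ZMod p) (l : Fin (n + 1) → ℤ)
    (i : Fin (n + 1)) : Prop :=
  sig pb p r l i = -1 ∧ ∀ j : Fin (n + 1), i ≤ j → nP pb p r l i j < nM pb p r l i j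

/-- `i` is the position of a `+` in the reduced `r`-signature of `λ` (i.e. `i` is
`r`-conormal for `λ`). -/
def RPlus (pb : Fin (n + 1) → ZMod 2) (p : ℕ) (r : ZMod p) (l : Fin (n + 1) → ℤ)
    (i : Fin (n + 1)) : Prop :=
  sig pb p r l i = 1 ∧ ∀ j : Fin (n + 1), j ≤ i → nM pb p r l j i < nP pb p r l j i

/-- `i` is the position of the leftmost `−` in the reduced `r`-signature (`r`-good). -/
def RGood (pb : Fin (n + 1) → ZMod 2) (p : ℕ) (r : ZMod p) (l : Fin (n + 1) → ℤ)
    (i : Fin (n + 1)) : Prop :=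
  RMinus pb p r l i ∧ ∀ j : Fin (n + 1), j < i → ¬ RMinus pb p r l j

/-- `i` is the position of the rightmost `+` in the reduced `r`-signature (`r`-cogood). -/
def RCogood (pb : Fin (n + 1) → ZMod 2) (p : ℕ) (r : ZMod p) (l : Fin (n + 1) → ℤ)
    (i : Fin (n + 1)) : Prop :=
  RPlus pb p r l i ∧ ∀ j : Fin (n + 1), i < j → ¬ RPlus pb p r l j

open Classical in
/-- The crystal operator `ẽ*_r`, with `none` playing the role of `0`. -/
noncomputable def eStar (pb : Fin (n + 1) → ZMod 2) (p : ℕ) (r : ZMod p)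
    (l : Fin (n + 1) → ℤ) : Option (Fin (n + 1) → ℤ) :=
  if h : (Finset.univ.filter (RMinus pb p r l)).Nonempty then
    some (l - eps ((Finset.univ.filter (RMinus pb p r l)).min' h))
  else none

open Classical in
/-- The crystal operator `f̃*_r`, with `none` playing the role of `0`. -/
noncomputable def fStar (pb : Fin (n + 1) → ZMod 2) (p : ℕ) (r : ZMod p)
    (l : Fin (n + 1) → ℤ) : Option (Fin (n + 1) → ℤ) :=
  if h : (Finset.univ.filter (RPlus pb p r l)).Nonempty then
    some (l + eps ((Finset.univ.filter (RPlus pb p r l)).max' h))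
  else none

/-- `A ↓ B`: there is an injection `θ : A → B` with `θ a ≤ a` for all `a ∈ A`. -/
def Down (A B : Finset (Fin (n + 1))) : Prop :=
  ∃ θ : Fin (n + 1) → Fin (n + 1), Set.InjOn θ ↑A ∧ ∀ a ∈ A, θ a ∈ B ∧ θ a ≤ a

/-- `C_{i,j}(λ) = {h ∈ (i..j) : c_{i,h}(λ) ≡ 0 (mod p)}`. -/
def Cset (pb : Fin (n + 1) → ZMod 2) (p : ℕ) (l : Fin (n + 1) → ℤ) (i j : Fin (n + 1)) :
    Finset (Fin (n + 1)) :=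
  (Finset.Ioo i j).filter fun h => ((res pb l i - res pb l h : ℤ) : ZMod p) = 0

/-- `B_{i,j}(λ) = {h ∈ [i..j) : b_{i,h}(λ) ≡ 0 (mod p)}`. -/
def Bset (pb : Fin (n + 1) → ZMod 2) (p : ℕ) (l : Fin (n + 1) → ℤ) (i j : Fin (n + 1)) :
    Finset (Fin (n + 1)) :=
  (Finset.Ico i j).filter fun h =>
    ((res pb l i - res pb (l + eps (h + 1)) (h + 1) : ℤ) : ZMod p) = 0

/-- The opposite parity sequence `p̄′_k = p̄_{w₀ k} + 1̄`, where `w₀ k = N + 1 − k`. -/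
def pbRev (pb : Fin (n + 1) → ZMod 2) : Fin (n + 1) → ZMod 2 := fun k => pb k.rev + 1

/-- `s̃ : ℤ^N → ℤ^N`, `(s̃ λ)_{w₀ i} = −λ_i`. -/
def stilde (l : Fin (n + 1) → ℤ) : Fin (n + 1) → ℤ := fun k => -l k.rev

/-- `(i, j)` is an `r`-canceling pair for `λ` (for `i < j`). -/
def CPair (pb : Fin (n + 1) → ZMod 2) (p : ℕ) (r : ZMod p) (l : Fin (n + 1) → ℤ)
    (i j : Fin (n + 1)) : Prop :=
  sig pb p r l i = -1 ∧ sig pb p r l j = 1 ∧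
    ∀ k : Fin (n + 1), i < k → k < j → sig pb p r l k = 0

/-- `(i i+1)·λ`: interchange coordinates `i` and `i+1`. -/
def swapL (i : Fin (n + 1)) (l : Fin (n + 1) → ℤ) : Fin (n + 1) → ℤ :=
  fun k => if k = i then l (i + 1) else if k = i + 1 then l i else l k

/-- The parity sequence obtained from `pb` by interchanging entries `i` and `i+1`. -/
def pbSwap (pb : Fin (n + 1) → ZMod 2) (i : Fin (n + 1)) : Fin (n + 1) → ZMod 2 :=
  fun k => if k = i then pb (i + 1) else if k = i + 1 then pb i else pb k

/-- The odd reflection `s_i` on `X(T)`. -/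
def sI (pb : Fin (n + 1) → ZMod 2) (p : ℕ) (i : Fin (n + 1)) (l : Fin (n + 1) → ℤ) :
    Fin (n + 1) → ℤ :=
  if ((sg pb i * l i - sg pb (i + 1) * l (i + 1) : ℤ) : ZMod p) = 0 then swapL i l
  else swapL i l + eps i - eps (i + 1)


section Statement3Aux

variable (pb : Fin (n + 1) → ZMod 2) (p : ℕ)

/-- The `a`-value `a_i = (λ + ρ, ε_i)` appearing in `wt`. -/
def aval (l : Fin (n + 1) → ℤ) (i : Fin (n + 1)) : ℤ := sg pb i * (l i + rho pb i)

/-- Indicator of `x ≡ r (mod p)`. -/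
def indC (x : ℤ) (r : ZMod p) : ℤ := if ((x : ℤ) : ZMod p) = r then 1 else 0

/-- `N_r(λ) = ∑_i (−1)^{p̄_i} [a_i ≡ r]`. -/
def Ncount (r : ZMod p) (l : Fin (n + 1) → ℤ) : ℤ :=
  ∑ i, sg pb i * indC p (aval pb l i) r

lemma sg_sq (i : Fin (n + 1)) : sg pb i * sg pb i = 1 := by
  unfold sg; split <;> norm_num

lemma zmod2_cases (x : ZMod 2) : x = 0 ∨ x = 1 := by revert x; decide

lemma gammaP_fst (x : ℤ) : (gammaP p x).1 = -((x - 1) / p) := by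
  simp [gammaP, LamP, delP]

lemma gammaP_snd [NeZero p] (x : ℤ) (r : ZMod p) :
    (gammaP p x).2 r = indC p x r - indC p (x - 1) r := by
  have h1 : ((((x - 1) % p + 1 : ℤ)) : ZMod p) = ((x : ℤ) : ZMod p) := by
    push_cast [ZMod.intCast_mod]; ring
  have h2 : (((x - 1) % p : ℤ) : ZMod p) = ((x - 1 : ℤ) : ZMod p) := ZMod.intCast_mod _ p
  simp only [gammaP, LamP, delP, Prod.sub_def, Prod.smul_def, Prod.snd, indC,
    Pi.sub_apply, Pi.smul_apply, Pi.zero_apply, smul_eq_mul, mul_zero, sub_zero, h1, h2]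
  simp [eq_comm]

lemma res_add_eps (l : Fin (n + 1) → ℤ) (i : Fin (n + 1)) :
    res pb (l + eps i) i = sg pb i * (l i + 1 + theta pb i) := by
  simp [res, eps]

lemma aval_of_zero (l : Fin (n + 1) → ℤ) (i : Fin (n + 1)) (h : pb i = 0) :
    aval pb l i = res pb (l + eps i) i ∧ aval pb l i - 1 = res pb l i := by
  have hs : sg pb i = 1 := by simp [sg, h]
  have hr : rho pb i = theta pb i + 1 := by unfold rho; rw [h]; norm_num
  rw [res_add_eps]
  unfold aval res
  rw [hs, hr]
  constructor <;> ring

lemma aval_of_one (l : Fin (n + 1) → ℤ) (i : Fin (n + 1)) (h : pb i = 1) :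
    aval pb l i = res pb l i ∧ aval pb l i - 1 = res pb (l + eps i) i := by
  have hs : sg pb i = -1 := by
    unfold sg; rw [h, if_neg (by decide : (1 : ZMod 2) ≠ 0)]
  have hr : rho pb i = theta pb i := by
    unfold rho; rw [h, if_neg (by decide : (1 : ZMod 2) ≠ 0), add_zero]
  rw [res_add_eps]
  unfold aval res
  rw [hs, hr]
  constructor <;> ring

lemma sign_ind (l : Fin (n + 1) → ℤ) (i : Fin (n + 1)) (r : ZMod p) :
    sg pb i * (indC p (aval pb l i) r - indC p (aval pb l i - 1) r)
      = indC p (res pb (l + eps i) i) r - indC p (res pb l i) r := by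
  rcases zmod2_cases (pb i) with h | h
  · have hs : sg pb i = 1 := by simp [sg, h]
    obtain ⟨h1, h2⟩ := aval_of_zero pb l i h
    rw [hs, h2, h1]; ring
  · have hs : sg pb i = -1 := by
      unfold sg; rw [h, if_neg (by decide : (1 : ZMod 2) ≠ 0)]
    obtain ⟨h1, h2⟩ := aval_of_one pb l i h
    rw [hs, h2, h1]; ring

lemma wtP_snd_expand [NeZero p] (l : Fin (n + 1) → ℤ) (r : ZMod p) :
    (wtP p pb l).2 r = ∑ i, sg pb i *
      (indC p (aval pb l i) r - indC p (aval pb l i - 1) r) := by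
  rw [wtP, Prod.snd_sum, Finset.sum_apply]
  exact Finset.sum_congr rfl fun i _ => by
    simp [Prod.smul_snd, gammaP_snd, aval]

lemma wtP_snd [NeZero p] (l : Fin (n + 1) → ℤ) (r : ZMod p) :
    (wtP p pb l).2 r = (Acount pb p r l : ℤ) - (Bcount pb p r l : ℤ) := by
  rw [wtP_snd_expand]
  simp_rw [sign_ind]
  rw [Finset.sum_sub_distrib, Acount, Bcount]
  simp [indC, Finset.sum_boole]

lemma indC_sub_one [NeZero p] (x : ℤ) (r : ZMod p) :
    indC p (x - 1) r = indC p x (r + 1) := by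
  unfold indC
  congr 1
  simp only [eq_iff_iff]
  push_cast
  constructor
  · intro h; rw [← h]; ring
  · intro h; rw [h]; ring

lemma wtP_snd_N [NeZero p] (l : Fin (n + 1) → ℤ) (r : ZMod p) :
    (wtP p pb l).2 r = Ncount pb p r l - Ncount pb p (r + 1) l := by
  rw [wtP_snd_expand, Ncount, Ncount, ← Finset.sum_sub_distrib]
  exact Finset.sum_congr rfl fun i _ => by rw [indC_sub_one]; ring

lemma Ncount_total [NeZero p] (l : Fin (n + 1) → ℤ) :
    ∑ r : ZMod p, Ncount pb p r l = ∑ i, sg pb i := by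
  unfold Ncount
  rw [Finset.sum_comm]
  refine Finset.sum_congr rfl fun i _ => ?_
  rw [← Finset.mul_sum]
  simp [indC, Finset.sum_ite_eq]

lemma const_of_step [NeZero p] (g : ZMod p → ℤ) (h : ∀ r, g r = g (r + 1)) (r : ZMod p) :
    g r = g 0 := by
  have key : ∀ k : ℕ, g (k : ZMod p) = g 0 := by
    intro k
    induction k with
    | zero => simp
    | succ k ih => push_cast; rw [← h, ih]
  rw [← ZMod.natCast_rightInverse r]
  exact key r.val

lemma Ncount_eq [NeZero p] (l m : Fin (n + 1) → ℤ)
    (h : ∀ r : ZMod p, Ncount pb p r l - Ncount pb p (r + 1) l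
        = Ncount pb p r m - Ncount pb p (r + 1) m) (r : ZMod p) :
    Ncount pb p r l = Ncount pb p r m := by
  set g : ZMod p → ℤ := fun r => Ncount pb p r l - Ncount pb p r m with hg
  have hstep : ∀ r, g r = g (r + 1) := by intro r; have := h r; simp only [hg]; linarith
  have hconst := const_of_step p g hstep
  have hsum : ∑ r : ZMod p, g r = 0 := by
    simp only [hg]
    rw [Finset.sum_sub_distrib, Ncount_total, Ncount_total, sub_self]
  have hcard : ∑ r : ZMod p, g r = (p : ℤ) * g 0 := by
    rw [Finset.sum_congr rfl fun r _ => hconst r]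
    simp [Finset.sum_const, ZMod.card, mul_comm]
  have hp0 : (p : ℤ) ≠ 0 := by exact_mod_cast NeZero.ne p
  have hg0 : g 0 = 0 := by
    rcases mul_eq_zero.mp (hcard ▸ hsum) with h' | h'
    · exact absurd h' hp0
    · exact h'
  have h2 := hconst r
  rw [hg0] at h2
  simp only [hg] at h2
  linarith

/-- `S(λ) = ∑_i (−1)^{p̄_i} s_i` where `a_i = p d_i + s_i`, `s_i ∈ {1,…,p}`. -/
def Sval (l : Fin (n + 1) → ℤ) : ℤ := ∑ i, sg pb i * ((aval pb l i - 1) % p + 1)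

lemma ell_key (l : Fin (n + 1) → ℤ) :
    ell l + ∑ i, rho pb i = -(p : ℤ) * (wtP p pb l).1 + Sval pb p l := by
  have hfst : (wtP p pb l).1 = ∑ i, sg pb i * (-((aval pb l i - 1) / p)) := by
    rw [wtP, Prod.fst_sum]
    exact Finset.sum_congr rfl fun i _ => by
      simp [Prod.smul_fst, gammaP_fst, aval]
  have key : ∀ i, l i + rho pb i = sg pb i * aval pb l i := by
    intro i
    have h1 : sg pb i * aval pb l i = (sg pb i * sg pb i) * (l i + rho pb i) := by
      unfold aval; ring
    rw [h1, sg_sq, one_mul]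
  calc ell l + ∑ i, rho pb i = ∑ i, (l i + rho pb i) := by rw [ell, Finset.sum_add_distrib]
    _ = ∑ i, sg pb i * aval pb l i := Finset.sum_congr rfl fun i _ => key i
    _ = ∑ i, (sg pb i * ((p : ℤ) * ((aval pb l i - 1) / p))
          + sg pb i * ((aval pb l i - 1) % p + 1)) := by
        refine Finset.sum_congr rfl fun i _ => ?_
        have hdm := Int.mul_ediv_add_emod (aval pb l i - 1) (p : ℤ)
        linear_combination (-(sg pb i)) * hdm
    _ = -(p : ℤ) * (wtP p pb l).1 + Sval pb p l := by
        rw [Finset.sum_add_distrib, hfst, Sval]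
        congr 1
        rw [Finset.mul_sum]
        exact Finset.sum_congr rfl fun i _ => by ring

lemma Sval_eq [NeZero p] (l : Fin (n + 1) → ℤ) :
    Sval pb p l = ∑ r : ZMod p, (((r.val : ℤ) - 1) % p + 1) * Ncount pb p r l := by
  unfold Sval Ncount
  simp_rw [Finset.mul_sum]
  rw [Finset.sum_comm]
  refine Finset.sum_congr rfl fun i _ => ?_
  simp_rw [indC, mul_ite, mul_one, mul_zero]
  rw [Finset.sum_ite_eq]
  simp only [Finset.mem_univ, if_true]
  rw [ZMod.val_intCast]
  have : ((aval pb l i % p : ℤ) - 1) % p = (aval pb l i - 1) % p := by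
    conv_rhs => rw [Int.sub_emod]
    rw [Int.sub_emod (aval pb l i % p) 1, Int.emod_emod_of_dvd (aval pb l i) dvd_rfl]
  rw [this]; ring

end Statement3Aux

/-- for a prime `p`, `wt(λ) = wt(μ)` in `P` iff `l(λ) = l(μ)` and
`A_r(λ) − B_r(λ) = A_r(μ) − B_r(μ)` for all `r ∈ ℤ/pℤ`. -/
theorem statement3 (p : ℕ) (hp : p.Prime) (pb : Fin (n + 1) → ZMod 2)
    (lam mu : Fin (n + 1) → ℤ) :
    wtP p pb lam = wtP p pb mu ↔
      (ell lam = ell mu ∧ ∀ r : ZMod p,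
        (Acount pb p r lam : ℤ) - (Bcount pb p r lam : ℤ) =
          (Acount pb p r mu : ℤ) - (Bcount pb p r mu : ℤ)) := by
  haveI : NeZero p := ⟨hp.ne_zero⟩
  have hp0 : (p : ℤ) ≠ 0 := by exact_mod_cast hp.ne_zero
  constructor
  · intro h
    have hsnd : ∀ r : ZMod p, (wtP p pb lam).2 r = (wtP p pb mu).2 r := fun r => by rw [h]
    have hAB : ∀ r : ZMod p,
        (Acount pb p r lam : ℤ) - (Bcount pb p r lam : ℤ) =
          (Acount pb p r mu : ℤ) - (Bcount pb p r mu : ℤ) := fun r => by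
      rw [← wtP_snd, ← wtP_snd, hsnd r]
    refine ⟨?_, hAB⟩
    have hN : ∀ r : ZMod p, Ncount pb p r lam = Ncount pb p r mu :=
      Ncount_eq pb p lam mu (fun r => by rw [← wtP_snd_N, ← wtP_snd_N, hsnd r])
    have hS : Sval pb p lam = Sval pb p mu := by
      rw [Sval_eq, Sval_eq]
      exact Finset.sum_congr rfl fun r _ => by rw [hN r]
    have e1 := ell_key pb p lam
    have e2 := ell_key pb p mu
    have hfst : (wtP p pb lam).1 = (wtP p pb mu).1 := by rw [h]
    rw [hfst] at e1
    linarith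
  · rintro ⟨h1, h2⟩
    have hsnd : ∀ r : ZMod p, (wtP p pb lam).2 r = (wtP p pb mu).2 r := fun r => by
      rw [wtP_snd, wtP_snd, h2 r]
    have hN : ∀ r : ZMod p, Ncount pb p r lam = Ncount pb p r mu :=
      Ncount_eq pb p lam mu (fun r => by rw [← wtP_snd_N, ← wtP_snd_N, hsnd r])
    have hS : Sval pb p lam = Sval pb p mu := by
      rw [Sval_eq, Sval_eq]
      exact Finset.sum_congr rfl fun r _ => by rw [hN r]
    have e1 := ell_key pb p lam
    have e2 := ell_key pb p mu
    have hfst : (wtP p pb lam).1 = (wtP p pb mu).1 := by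
      have hmul : (p : ℤ) * (wtP p pb lam).1 = (p : ℤ) * (wtP p pb mu).1 := by linarith
      exact mul_left_cancel₀ hp0 hmul
    exact Prod.ext hfst (funext hsnd)

end Kujawa
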